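/- Define K(2) = 1 and suppose K(n) ≤ 4K(n−1) + 72n^{3/2}·max(34n³/δ, log(5n)·K(n−1)) for all n ≥ 3, where 0 < δ < 1. Then K(n) ≤ 73^n·(n!)^{3/2}·(log(5n))^n·δ^{-1} for all n ≥ 2. -/

import Mathlib

lemma two_le_log_ten' : (2:ℝ) ≤ Real.log 10 := by
  rw [Real.le_log_iff_exp_le (by norm_num)]
  have h := Real.exp_one_lt_d9
  have h0 := Real.exp_pos 1
  calc Real.exp 2 = Real.exp 1 * Real.exp 1 := by
        rw [← Real.exp_add]; norm_num
    _ ≤ 10 := by nlinarith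

lemma aux34' (n : ℕ) (hn : 1 ≤ n) : 34*(n+1)^3 ≤ 16*73^n := by
  induction n with
  | zero => omega
  | succ m ih =>
    rcases Nat.eq_zero_or_pos m with h | h
    · subst h; norm_num
    · have hb : (m+1+1)^3 ≤ (2*(m+1))^3 := Nat.pow_le_pow_left (by omega) 3
      have h1 : 34*(m+1+1)^3 ≤ 8*(34*(m+1)^3) := by
        have : (2*(m+1))^3 = 8*(m+1)^3 := by ring
        omega
      have h2 : 8*(34*(m+1)^3) ≤ 8*(16*73^m) := by
        have := ih h; omega
      have h3 : 8*(16*73^m) ≤ 16*73^(m+1) := by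
        rw [pow_succ]
        have := Nat.one_le_two_pow (n := m)
        nlinarith [pow_pos (show (0:ℕ) < 73 by norm_num) m]
      omega

theorem collision_count_recursion_bound (δ : ℝ) (hδ0 : 0 < δ) (hδ1 : δ < 1)
    (K : ℕ → ℝ) (hK2 : K 2 = 1)
    (hrec : ∀ n : ℕ, 3 ≤ n →
      K n ≤ 4 * K (n - 1) +
        72 * (n : ℝ) ^ ((3 : ℝ) / 2) *
          max (34 * (n : ℝ) ^ 3 / δ) (Real.log (5 * n) * K (n - 1))) :
    ∀ n : ℕ, 2 ≤ n →
      K n ≤ 73 ^ n * ((n.factorial : ℝ)) ^ ((3 : ℝ) / 2) * (Real.log (5 * n)) ^ n / δ := by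
  have hlog10 := two_le_log_ten'
  refine Nat.le_induction ?_ ?_
  · -- base case n = 2
    rw [hK2]
    have : ((Nat.factorial 2 : ℕ) : ℝ) = 2 := by norm_num [Nat.factorial]
    rw [this]
    have h10 : (5:ℝ) * ((2:ℕ):ℝ) = 10 := by norm_num
    rw [h10, le_div_iff₀ hδ0]
    have h2 : (2:ℝ) ≤ (2:ℝ) ^ ((3:ℝ)/2) := by
      nth_rewrite 1 [show (2:ℝ) = (2:ℝ)^(1:ℝ) by rw [Real.rpow_one]]
      exact Real.rpow_le_rpow_of_exponent_le one_le_two (by norm_num)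
    nlinarith [sq_nonneg (Real.log 10 - 2)]
  · -- inductive step
    intro n hn IH
    have hn2 : (2:ℝ) ≤ (n:ℝ) := by exact_mod_cast hn
    set Ln := Real.log (5 * (n:ℝ)) with hLn_def
    set L := Real.log (5 * ((n+1:ℕ):ℝ)) with hL_def
    have hLn2 : (2:ℝ) ≤ Ln := by
      refine hlog10.trans (Real.log_le_log (by norm_num) (by linarith))
    have hLnL : Ln ≤ L := by
      apply Real.log_le_log (by linarith)
      push_cast; linarith
    have hL2 : (2:ℝ) ≤ L := hLn2.trans hLnL
    set f := ((n.factorial : ℕ):ℝ) ^ ((3:ℝ)/2) with hf_def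
    have hfact2 : (2:ℝ) ≤ ((n.factorial : ℕ):ℝ) := by
      have : 2 ≤ n.factorial := le_trans hn (Nat.self_le_factorial n)
      exact_mod_cast this
    have hf2 : (2:ℝ) ≤ f := by
      calc (2:ℝ) ≤ ((n.factorial:ℕ):ℝ) := hfact2
        _ = ((n.factorial:ℕ):ℝ) ^ (1:ℝ) := (Real.rpow_one _).symm
        _ ≤ f := Real.rpow_le_rpow_of_exponent_le (by linarith) (by norm_num)
    have hg4 : (4:ℝ) ≤ Ln ^ n := by
      calc (4:ℝ) = 2^2 := by norm_num
        _ ≤ (2:ℝ)^n := pow_le_pow_right₀ one_le_two hn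
        _ ≤ Ln ^ n := pow_le_pow_left₀ (by norm_num) hLn2 n
    set P := (73:ℝ)^n * f * Ln^n / δ with hP_def
    have hP0 : 0 < P := by
      apply div_pos _ hδ0
      apply mul_pos (mul_pos (pow_pos (by norm_num) n) (by linarith)) (by positivity)
    -- the recursion at n+1
    have hrec' := hrec (n+1) (by omega)
    simp only [Nat.add_sub_cancel] at hrec'
    have hKP : K n ≤ P := IH
    -- bound the max
    have h73pos : (0:ℝ) < (73:ℝ)^n := pow_pos (by norm_num) n
    have hmax : max (34 * ((n+1:ℕ):ℝ) ^ 3 / δ) (L * K n) ≤ L * P := by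
      apply max_le
      · have h34 : (34:ℝ) * ((n+1:ℕ):ℝ)^3 ≤ 16 * 73^n := by
          have := aux34' n (by omega)
          calc (34:ℝ) * ((n+1:ℕ):ℝ)^3 = ((34*(n+1)^3 : ℕ):ℝ) := by push_cast; ring
            _ ≤ ((16*73^n : ℕ):ℝ) := by exact_mod_cast this
            _ = 16 * 73^n := by push_cast; ring
        have h8 : (8:ℝ) ≤ f * Ln^n := by nlinarith [hf2, hg4]
        have h16 : (16:ℝ) * 73^n ≤ 2 * ((73:ℝ)^n * (f * Ln^n)) := by
          have := mul_le_mul_of_nonneg_left h8 h73pos.le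
          linarith
        have hkey : (34:ℝ) * ((n+1:ℕ):ℝ)^3 ≤ L * ((73:ℝ)^n * f * Ln^n) := by
          have h2L : 2 * ((73:ℝ)^n * (f * Ln^n)) ≤ L * ((73:ℝ)^n * (f * Ln^n)) := by
            have hN : (0:ℝ) ≤ (73:ℝ)^n * (f * Ln^n) := by positivity
            exact mul_le_mul_of_nonneg_right hL2 hN
          calc (34:ℝ) * ((n+1:ℕ):ℝ)^3 ≤ 16 * 73^n := h34
            _ ≤ 2 * ((73:ℝ)^n * (f * Ln^n)) := h16
            _ ≤ L * ((73:ℝ)^n * (f * Ln^n)) := h2L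
            _ = L * ((73:ℝ)^n * f * Ln^n) := by ring
        calc 34 * ((n+1:ℕ):ℝ)^3 / δ ≤ L * ((73:ℝ)^n * f * Ln^n) / δ := by
              exact (div_le_div_iff_of_pos_right hδ0).mpr hkey
          _ = L * P := by rw [hP_def]; ring
      · exact mul_le_mul_of_nonneg_left hKP (by linarith)
    set X := ((n+1:ℕ):ℝ) ^ ((3:ℝ)/2) with hX_def
    have hX3 : (3:ℝ) ≤ X := by
      calc (3:ℝ) ≤ ((n+1:ℕ):ℝ) := by push_cast; linarith
        _ = ((n+1:ℕ):ℝ) ^ (1:ℝ) := (Real.rpow_one _).symm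
        _ ≤ X := Real.rpow_le_rpow_of_exponent_le (by push_cast; linarith) (by norm_num)
    have hbound : K (n+1) ≤ 4 * P + 72 * X * (L * P) := by
      calc K (n+1) ≤ 4 * K n + 72 * X * max (34 * ((n+1:ℕ):ℝ) ^ 3 / δ) (L * K n) := hrec'
        _ ≤ 4 * P + 72 * X * (L * P) := by
            have hX0 : (0:ℝ) ≤ 72 * X := by linarith
            nlinarith [mul_le_mul_of_nonneg_left hmax hX0]
    -- rewrite the goal
    have hfactsucc : (((n+1).factorial : ℕ):ℝ) = ((n+1:ℕ):ℝ) * ((n.factorial:ℕ):ℝ) := by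
      rw [Nat.factorial_succ]; push_cast; ring
    have hsplit : (((n+1).factorial : ℕ):ℝ) ^ ((3:ℝ)/2) = X * f := by
      rw [hfactsucc, Real.mul_rpow (by positivity) (by positivity)]
    calc K (n+1) ≤ 4 * P + 72 * X * (L * P) := hbound
      _ ≤ 73 * X * L * P := by nlinarith [mul_le_mul hX3 hL2 (by norm_num) (by linarith : (0:ℝ) ≤ X)]
      _ = 73 * X * L * ((73:ℝ)^n * f * Ln^n) / δ := by rw [hP_def]; ring
      _ ≤ ((73:ℝ)^n * 73) * (X * f) * (L^n * L) / δ := by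
          have hLpow : Ln ^ n ≤ L ^ n := pow_le_pow_left₀ (by linarith) hLnL n
          have hc : (0:ℝ) ≤ 73 * X * L * ((73:ℝ)^n * f) := by positivity
          have key2 : 73 * X * L * ((73:ℝ)^n * f * Ln^n)
              ≤ ((73:ℝ)^n * 73) * (X * f) * (L^n * L) := by
            calc 73 * X * L * ((73:ℝ)^n * f * Ln^n)
                = (73 * X * L * ((73:ℝ)^n * f)) * Ln^n := by ring
              _ ≤ (73 * X * L * ((73:ℝ)^n * f)) * L^n :=
                  mul_le_mul_of_nonneg_left hLpow hc
              _ = ((73:ℝ)^n * 73) * (X * f) * (L^n * L) := by ring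
          exact (div_le_div_iff_of_pos_right hδ0).mpr key2
      _ = 73 ^ (n+1) * (((n+1).factorial : ℕ):ℝ) ^ ((3:ℝ)/2) * L ^ (n+1) / δ := by
          rw [hsplit, pow_succ, pow_succ]
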